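/- arXiv:2308.07742 — 4 statements merged into one kernel-verified Lean document; each statement's English description precedes it below -/
import Mathlib

section
/- Let d ≥ 1, let W : ℝ^d → ℝ^d be continuously differentiable with compact support, let Δ ⊂ ℝ^d be a bounded measurable set, and let q : ℝ × ℝ^d → ℝ be continuously differentiable. Then the map t ↦ ∫_{F_t(Δ)} q(t, y) dy is differentiable at t = 0 and d/dt|_{t=0} ∫_{F_t(Δ)} q(t, y) dy = ∫_Δ ( q̇(x) + q(0, x) · div W(x) ) dx, where q̇(x) := d/dt|_{t=0} q(t, F_t(x)) is the material derivative of q along W. -/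
open MeasureTheory

attribute [local instance] Matrix.normedAddCommGroup Matrix.normedSpace

lemma contDiff_det' {n : ℕ} : ContDiff ℝ 1 (fun M : Matrix (Fin n) (Fin n) ℝ => M.det) := by
  simp only [Matrix.det_apply]
  refine ContDiff.sum fun σ _ => ?_
  simp only [Units.smul_def, zsmul_eq_mul]
  refine ContDiff.mul contDiff_const (contDiff_prod fun i _ => ?_)
  exact ((ContinuousLinearMap.proj i).comp
    (ContinuousLinearMap.proj (R := ℝ) (φ := fun _ : Fin n => Fin n → ℝ) (σ i))).contDiff

lemma hasDerivAt_det_one_add_smul {n : ℕ} (M : Matrix (Fin n) (Fin n) ℝ) (t : ℝ) :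
    HasDerivAt (fun s : ℝ => Matrix.det (1 + s • M))
      (fderiv ℝ (fun N : Matrix (Fin n) (Fin n) ℝ => N.det) (1 + t • M) M) t := by
  have h1 : HasDerivAt (fun s : ℝ => (1 : Matrix (Fin n) (Fin n) ℝ) + s • M) M t := by
    have := ((hasDerivAt_id t).smul_const M).const_add (1 : Matrix (Fin n) (Fin n) ℝ)
    rw [one_smul] at this; exact this
  exact ((contDiff_det'.differentiable one_ne_zero).differentiableAt.hasFDerivAt).comp_hasDerivAt t h1

lemma fderiv_det_at_one {n : ℕ} (M : Matrix (Fin n) (Fin n) ℝ) :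
    fderiv ℝ (fun N : Matrix (Fin n) (Fin n) ℝ => N.det) (1 + (0:ℝ) • M) M = Matrix.trace M := by
  have h1 := hasDerivAt_det_one_add_smul M 0
  have h2 : HasDerivAt (fun s : ℝ => Matrix.det (1 + s • M)) (Matrix.trace M) 0 := by
    have hfun : (fun s : ℝ => Matrix.det (1 + s • M)) =
        fun s : ℝ => 1 + Matrix.trace M * s +
          Polynomial.eval s (Polynomial.divX (Polynomial.divX
            (Matrix.det (1 + (Polynomial.X : Polynomial ℝ) • M.map Polynomial.C)))) * s ^ 2 := by
      funext s; exact Matrix.det_one_add_smul s M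
    rw [hfun]
    have ha : HasDerivAt (fun s : ℝ => 1 + Matrix.trace M * s) (Matrix.trace M) 0 := by
      simpa using ((hasDerivAt_id (0:ℝ)).const_mul (Matrix.trace M)).const_add 1
    have hb : HasDerivAt (fun s : ℝ => Polynomial.eval s (Polynomial.divX (Polynomial.divX
        (Matrix.det (1 + (Polynomial.X : Polynomial ℝ) • M.map Polynomial.C)))) * s ^ 2) 0 0 := by
      have := (Polynomial.hasDerivAt (Polynomial.divX (Polynomial.divX
        (Matrix.det (1 + (Polynomial.X : Polynomial ℝ) • M.map Polynomial.C)))) 0).mul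
        (hasDerivAt_pow 2 (0:ℝ))
      simp at this; exact this
    have := ha.add hb; simp at this; exact this
  exact h1.unique h2

/-- Jacobian matrix of a vector field on `ℝ^d`: `(jac v x) i j = ∂ v_i / ∂ x_j`. -/
noncomputable def jac {d : ℕ} (v : EuclideanSpace ℝ (Fin d) → EuclideanSpace ℝ (Fin d))
    (x : EuclideanSpace ℝ (Fin d)) : Matrix (Fin d) (Fin d) ℝ :=
  Matrix.of fun i j => fderiv ℝ v x (EuclideanSpace.single j (1 : ℝ)) i

/-- Divergence of a vector field: the trace of its Jacobian. -/
noncomputable def divg {d : ℕ} (v : EuclideanSpace ℝ (Fin d) → EuclideanSpace ℝ (Fin d))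
    (x : EuclideanSpace ℝ (Fin d)) : ℝ :=
  Matrix.trace (jac v x)

noncomputable def bE (d : ℕ) : Module.Basis (Fin d) ℝ (EuclideanSpace ℝ (Fin d)) :=
  (EuclideanSpace.basisFun (Fin d) ℝ).toBasis

noncomputable def Mat {d : ℕ} (W : EuclideanSpace ℝ (Fin d) → EuclideanSpace ℝ (Fin d))
    (x : EuclideanSpace ℝ (Fin d)) : Matrix (Fin d) (Fin d) ℝ :=
  LinearMap.toMatrix (bE d) (bE d)
    (fderiv ℝ W x : EuclideanSpace ℝ (Fin d) →ₗ[ℝ] EuclideanSpace ℝ (Fin d))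

section main

variable {d : ℕ}
local notation "E" => EuclideanSpace ℝ (Fin d)

lemma Mat_eq_jac (W : E → E) (x : E) : Mat W x = jac W x := by
  ext i j
  simp [Mat, jac, LinearMap.toMatrix_apply, bE, OrthonormalBasis.coe_toBasis,
    OrthonormalBasis.coe_toBasis_repr_apply, EuclideanSpace.basisFun_repr,
    EuclideanSpace.basisFun_apply]

lemma trace_Mat_eq_divg (W : E → E) (x : E) : Matrix.trace (Mat W x) = divg W x := by
  rw [Mat_eq_jac]; rfl

lemma det_clm_eq (W : E → E) (t : ℝ) (x : E) :
    (ContinuousLinearMap.id ℝ (EuclideanSpace ℝ (Fin d)) + t • fderiv ℝ W x).det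
      = Matrix.det (1 + t • Mat W x) := by
  rw [ContinuousLinearMap.det, ← LinearMap.det_toMatrix (bE d)]
  congr 1
  simp only [ContinuousLinearMap.coe_add, ContinuousLinearMap.coe_smul,
    ContinuousLinearMap.coe_id, map_add, _root_.map_smul, Mat]
  congr 1
  exact LinearMap.toMatrix_id (bE d)

lemma Mat_continuous (W : E → E) (hW : ContDiff ℝ 1 W) : Continuous fun x => Mat W x := by
  have hAcont : Continuous fun x => fderiv ℝ W x := hW.continuous_fderiv one_ne_zero
  simp only [Mat_eq_jac]
  apply continuous_matrix
  intro i j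
  have h1 : Continuous fun x => fderiv ℝ W x (EuclideanSpace.single j (1:ℝ)) :=
    hAcont.clm_apply continuous_const
  exact (EuclideanSpace.proj i).continuous.comp h1

theorem domain_integral_shape_derivative' (hd : 1 ≤ d)
    (W : EuclideanSpace ℝ (Fin d) → EuclideanSpace ℝ (Fin d))
    (hW : ContDiff ℝ 1 W) (hWc : HasCompactSupport W)
    (Δ : Set (EuclideanSpace ℝ (Fin d))) (hΔm : MeasurableSet Δ)
    (hΔb : Bornology.IsBounded Δ)
    (q : ℝ × EuclideanSpace ℝ (Fin d) → ℝ) (hq : ContDiff ℝ 1 q) :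
    HasDerivAt (fun t => ∫ y in (fun x => x + t • W x) '' Δ, q (t, y))
      (∫ x in Δ, (deriv (fun t => q (t, x + t • W x)) 0 + q (0, x) * divg W x)) 0 := by
  classical
  obtain ⟨L, hL⟩ := ContDiff.lipschitzWith_of_hasCompactSupport hWc hW one_ne_zero
  set μ : Measure E := volume.restrict Δ with hμ
  haveI : IsFiniteMeasure μ := by
    constructor
    rw [hμ, Measure.restrict_apply_univ]
    exact hΔb.measure_lt_top
  -- continuity facts
  have hMcont : Continuous fun x => Mat W x := Mat_continuous W hW
  have hq'cont : Continuous fun p : ℝ × E => fderiv ℝ q p := hq.continuous_fderiv one_ne_zero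
  have hdet'cont : Continuous fun N : Matrix (Fin d) (Fin d) ℝ =>
      fderiv ℝ (fun N : Matrix (Fin d) (Fin d) ℝ => N.det) N := contDiff_det'.continuous_fderiv one_ne_zero
  have hψ : Continuous fun p : ℝ × E => (1 : Matrix (Fin d) (Fin d) ℝ) + p.1 • Mat W p.2 :=
    continuous_const.add (continuous_fst.smul (hMcont.comp continuous_snd))
  have hφ : Continuous fun p : ℝ × E => ((p.1, p.2 + p.1 • W p.2) : ℝ × E) :=
    continuous_fst.prodMk (continuous_snd.add (continuous_fst.smul (hW.continuous.comp continuous_snd)))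
  set G : ℝ × E → ℝ := fun p => (1 + p.1 • Mat W p.2).det * q (p.1, p.2 + p.1 • W p.2) with hGdef
  set G' : ℝ × E → ℝ := fun p =>
    (fderiv ℝ (fun N : Matrix (Fin d) (Fin d) ℝ => N.det) (1 + p.1 • Mat W p.2)) (Mat W p.2)
        * q (p.1, p.2 + p.1 • W p.2)
      + (1 + p.1 • Mat W p.2).det * (fderiv ℝ q (p.1, p.2 + p.1 • W p.2)) ((1 : ℝ), W p.2)
    with hG'def
  have hGcont : Continuous G := (contDiff_det'.continuous.comp hψ).mul (hq.continuous.comp hφ)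
  have hG'cont : Continuous G' := by
    refine Continuous.add (Continuous.mul ?_ (hq.continuous.comp hφ))
      ((contDiff_det'.continuous.comp hψ).mul ?_)
    · exact (hdet'cont.comp hψ).clm_apply (hMcont.comp continuous_snd)
    · exact (hq'cont.comp hφ).clm_apply
        (continuous_const.prodMk (hW.continuous.comp continuous_snd))
  -- compact sets and bounds
  have hK0c : IsCompact (closure Δ) := hΔb.isCompact_closure
  have hJK : IsCompact (Set.Icc (-1:ℝ) 1 ×ˢ closure Δ) := isCompact_Icc.prod hK0c
  obtain ⟨C0, hC0⟩ := hJK.exists_bound_of_continuousOn hGcont.continuousOn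
  obtain ⟨C1, hC1⟩ := hJK.exists_bound_of_continuousOn hG'cont.continuousOn
  -- positivity of the determinant near t = 0
  obtain ⟨δ₀, hδ₀pos, hδ₀⟩ : ∃ δ₀ > 0, ∀ t : ℝ, |t| < δ₀ → ∀ x ∈ closure Δ,
      0 < (1 + t • Mat W x).det := by
    have hopen : IsOpen ((fun p : ℝ × E => (1 + p.1 • Mat W p.2).det) ⁻¹' Set.Ioi 0) :=
      (contDiff_det'.continuous.comp hψ).isOpen_preimage _ isOpen_Ioi
    have hsub : ({0} : Set ℝ) ×ˢ closure Δ ⊆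
        (fun p : ℝ × E => (1 + p.1 • Mat W p.2).det) ⁻¹' Set.Ioi 0 := by
      rintro ⟨t, x⟩ ⟨ht, hx⟩
      simp only [Set.mem_singleton_iff] at ht
      subst ht
      simp [Set.mem_preimage, Set.mem_Ioi]
    obtain ⟨u, v, hu, hv, h0u, hKv, huv⟩ :=
      generalized_tube_lemma isCompact_singleton hK0c hopen hsub
    obtain ⟨δ₀, hδ₀pos, hball⟩ := Metric.isOpen_iff.1 hu 0 (h0u rfl)
    refine ⟨δ₀, hδ₀pos, fun t ht x hx => ?_⟩
    have : (t, x) ∈ u ×ˢ v := ⟨hball (by simpa [Real.dist_eq] using ht), hKv hx⟩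
    exact huv this
  set δ : ℝ := min δ₀ (min 1 (1 / ((L : ℝ) + 1))) with hδdef
  have hδpos : 0 < δ := by
    refine lt_min hδ₀pos (lt_min one_pos ?_)
    positivity
  have hδle1 : δ ≤ 1 := le_trans (min_le_right _ _) (min_le_left _ _)
  have hδleL : δ ≤ 1 / ((L : ℝ) + 1) := le_trans (min_le_right _ _) (min_le_right _ _)
  -- injectivity
  have hinj : ∀ t ∈ Metric.ball (0:ℝ) δ, Set.InjOn (fun x => x + t • W x) Δ := by
    intro t ht x hx y hy hxy
    simp only [Metric.mem_ball, Real.dist_eq, sub_zero] at ht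
    by_contra hne
    have hsub : x - y = t • (W y - W x) := by
      have := hxy
      simp only at this
      rw [smul_sub]
      abel_nf
      linear_combination (norm := module) this
    have hnorm : ‖x - y‖ = |t| * ‖W y - W x‖ := by
      rw [hsub, norm_smul, Real.norm_eq_abs]
    have hlip : ‖W y - W x‖ ≤ (L : ℝ) * ‖y - x‖ := by
      have := hL.dist_le_mul y x
      rwa [dist_eq_norm, dist_eq_norm] at this
    have hxy' : (0:ℝ) < ‖x - y‖ := by
      rw [norm_pos_iff]
      exact sub_ne_zero_of_ne hne
    have hyx : ‖y - x‖ = ‖x - y‖ := norm_sub_rev y x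
    have hL0 : (0:ℝ) ≤ L := L.coe_nonneg
    have htL : |t| * (L : ℝ) < 1 := by
      have h2 : |t| * ((L : ℝ) + 1) < δ * ((L : ℝ) + 1) :=
        mul_lt_mul_of_pos_right ht (by positivity)
      have h3 : δ * ((L : ℝ) + 1) ≤ 1 := (le_div_iff₀ (by positivity)).1 hδleL
      nlinarith [abs_nonneg t]
    nlinarith [mul_le_mul_of_nonneg_left hlip (abs_nonneg t),
      mul_lt_mul_of_pos_right htL hxy', hnorm, hyx]
  -- change of variables on the ball
  have hev : ∀ t ∈ Metric.ball (0:ℝ) δ,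
      (∫ y in (fun x => x + t • W x) '' Δ, q (t, y)) = ∫ x in Δ, G (t, x) := by
    intro t ht
    have htabs : |t| < δ := by simpa [Real.dist_eq] using ht
    have hf' : ∀ x ∈ Δ, HasFDerivWithinAt (fun x => x + t • W x)
        (ContinuousLinearMap.id ℝ (EuclideanSpace ℝ (Fin d)) + t • fderiv ℝ W x) Δ x := by
      intro x hx
      exact ((hasFDerivAt_id x).add
        (((hW.differentiable one_ne_zero x).hasFDerivAt).const_smul t)).hasFDerivWithinAt
    rw [integral_image_eq_integral_abs_det_fderiv_smul volume hΔm hf' (hinj t ht)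
      (fun y => q (t, y))]
    refine setIntegral_congr_fun hΔm fun x hx => ?_
    have hpos : 0 < (1 + t • Mat W x).det :=
      hδ₀ t (lt_of_lt_of_le htabs (min_le_left _ _)) x (subset_closure hx)
    rw [det_clm_eq, abs_of_pos hpos, smul_eq_mul]
  -- pointwise derivative
  have hderiv : ∀ (x : E) (t : ℝ),
      HasDerivAt (fun s : ℝ => G (s, x)) (G' (t, x)) t := by
    intro x t
    have hdet : HasDerivAt (fun s : ℝ => (1 + s • Mat W x).det)
        (fderiv ℝ (fun N : Matrix (Fin d) (Fin d) ℝ => N.det) (1 + t • Mat W x) (Mat W x)) t :=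
      hasDerivAt_det_one_add_smul _ t
    have hcurve : HasDerivAt (fun s : ℝ => ((s, x + s • W x) : ℝ × E)) ((1:ℝ), W x) t := by
      refine (hasDerivAt_id t).prodMk ?_
      simpa using ((hasDerivAt_id t).smul_const (W x)).const_add x
    have hq1 : HasDerivAt (fun s : ℝ => q (s, x + s • W x))
        (fderiv ℝ q (t, x + t • W x) ((1:ℝ), W x)) t :=
      ((hq.differentiable one_ne_zero).differentiableAt.hasFDerivAt).comp_hasDerivAt t hcurve
    exact hdet.mul hq1
  -- dominated derivative theorem
  have key := hasDerivAt_integral_of_dominated_loc_of_deriv_le (μ := μ)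
    (F := fun t x => G (t, x)) (F' := fun t x => G' (t, x)) (bound := fun _ => C1)
    (x₀ := (0:ℝ)) (Metric.ball_mem_nhds (0:ℝ) hδpos)
    (Filter.Eventually.of_forall fun t =>
      (hGcont.comp (Continuous.prodMk_right t)).aestronglyMeasurable)
    (by
      refine Integrable.mono' (integrable_const C0)
        ((hGcont.comp (Continuous.prodMk_right (0:ℝ))).aestronglyMeasurable) ?_
      refine (ae_restrict_iff' hΔm).2 (Filter.Eventually.of_forall fun x hx => ?_)
      exact hC0 (0, x) ⟨⟨by norm_num, by norm_num⟩, subset_closure hx⟩)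
    ((hG'cont.comp (Continuous.prodMk_right (0:ℝ))).aestronglyMeasurable)
    (by
      refine (ae_restrict_iff' hΔm).2 (Filter.Eventually.of_forall fun x hx => ?_)
      intro t ht
      have htabs : |t| < δ := by simpa [Real.dist_eq] using ht
      have ht1 : |t| ≤ 1 := le_of_lt (lt_of_lt_of_le htabs hδle1)
      exact hC1 (t, x) ⟨⟨neg_le_of_abs_le ht1, le_of_abs_le ht1⟩, subset_closure hx⟩)
    (integrable_const C1)
    (Filter.Eventually.of_forall fun x t _ => hderiv x t)
  -- final identification of the derivative value
  have heq : ∀ x : E, G' (0, x)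
      = deriv (fun t => q (t, x + t • W x)) 0 + q (0, x) * divg W x := by
    intro x
    have hcurve : HasDerivAt (fun s : ℝ => ((s, x + s • W x) : ℝ × E)) ((1:ℝ), W x) 0 := by
      refine (hasDerivAt_id 0).prodMk ?_
      simpa using ((hasDerivAt_id (0:ℝ)).smul_const (W x)).const_add x
    have hq1 : HasDerivAt (fun s : ℝ => q (s, x + s • W x))
        (fderiv ℝ q (0, x + (0:ℝ) • W x) ((1:ℝ), W x)) 0 :=
      ((hq.differentiable one_ne_zero).differentiableAt.hasFDerivAt).comp_hasDerivAt 0 hcurve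
    have hder : deriv (fun t => q (t, x + t • W x)) 0
        = fderiv ℝ q (0, x + (0:ℝ) • W x) ((1:ℝ), W x) := hq1.deriv
    simp only [hG'def]
    rw [fderiv_det_at_one, trace_Mat_eq_divg, ← hder]
    simp only [zero_smul, add_zero, Matrix.det_one]
    ring
  have hfinal := key.2
  have hintlhs : (∫ x, G' (0, x) ∂μ)
      = ∫ x in Δ, (deriv (fun t => q (t, x + t • W x)) 0 + q (0, x) * divg W x) := by
    rw [hμ]
    exact integral_congr_ae (Filter.Eventually.of_forall fun x => heq x)
  rw [hintlhs] at hfinal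
  refine hfinal.congr_of_eventuallyEq ?_
  exact Filter.eventuallyEq_of_mem (Metric.ball_mem_nhds (0:ℝ) hδpos) hev

/-- Shape derivative of a domain integral of a time-dependent integrand, via the
material derivative: `d/dt|₀ ∫_{F_t(Δ)} q(t,y) dy = ∫_Δ q̇ + q(0,·) div W`. -/
theorem domain_integral_shape_derivative {d : ℕ} (hd : 1 ≤ d)
    (W : EuclideanSpace ℝ (Fin d) → EuclideanSpace ℝ (Fin d))
    (hW : ContDiff ℝ 1 W) (hWc : HasCompactSupport W)
    (Δ : Set (EuclideanSpace ℝ (Fin d))) (hΔm : MeasurableSet Δ)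
    (hΔb : Bornology.IsBounded Δ)
    (q : ℝ × EuclideanSpace ℝ (Fin d) → ℝ) (hq : ContDiff ℝ 1 q) :
    HasDerivAt (fun t => ∫ y in (fun x => x + t • W x) '' Δ, q (t, y))
      (∫ x in Δ, (deriv (fun t => q (t, x + t • W x)) 0 + q (0, x) * divg W x)) 0 :=
  domain_integral_shape_derivative' hd W hW hWc Δ hΔm hΔb q hq

end main
end

section
/- Let d ≥ 1, let W : ℝ^d → ℝ^d be continuously differentiable with compact support, and let Δ ⊂ ℝ^d be a bounded measurable set. Then the map t ↦ vol(F_t(Δ)) (the Lebesgue measure of the image F_t(Δ)) is differentiable at t = 0 and d/dt|_{t=0} vol(F_t(Δ)) = ∫_Δ div W(x) dx. -/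
open MeasureTheory

open Filter Topology Set

namespace VolShapeAux

variable {d : ℕ}

/-- Determinant, as a function on the pi type `Fin d → Fin d → ℝ`. -/
noncomputable def Det (m : Fin d → Fin d → ℝ) : ℝ := (Matrix.of m).det

lemma contDiff_Det : ContDiff ℝ 1 (Det (d := d)) := by
  have h : (Det (d := d)) = fun m =>
      ∑ σ : Equiv.Perm (Fin d), (((Equiv.Perm.sign σ : ℤ) : ℝ)) * ∏ i, m (σ i) i := by
    funext m
    simp [Det, Matrix.det_apply', Matrix.of_apply]
  rw [h]
  refine ContDiff.sum fun σ _ => ?_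
  refine ContDiff.mul contDiff_const ?_
  have hcd := contDiff_prod' (𝕜 := ℝ) (t := (Finset.univ : Finset (Fin d)))
    (f := fun i (m : Fin d → Fin d → ℝ) => m (σ i) i) (n := 1)
    (fun i _ => (contDiff_apply ℝ ℝ i).comp (contDiff_apply ℝ (Fin d → ℝ) (σ i)))
  have hfe : (∏ i : Fin d, fun (m : Fin d → Fin d → ℝ) => m (σ i) i)
      = fun (m : Fin d → Fin d → ℝ) => ∏ i : Fin d, m (σ i) i := by
    funext m
    simp [Finset.prod_apply]
  rwa [hfe] at hcd

/-- The identity matrix, as a pi-type function. -/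
noncomputable def E1 : Fin d → Fin d → ℝ := fun i j => (1 : Matrix (Fin d) (Fin d) ℝ) i j

lemma add_smul_of (t : ℝ) (m : Fin d → Fin d → ℝ) :
    Matrix.of (E1 + t • m) = 1 + t • Matrix.of m := by
  ext i j
  simp [E1, Matrix.add_apply, Matrix.smul_apply]

lemma Det_add_smul (t : ℝ) (m : Fin d → Fin d → ℝ) :
    Det (E1 + t • m) = (1 + t • Matrix.of m).det := by
  rw [Det, add_smul_of]

lemma Det_E1 : Det (E1 (d := d)) = 1 := by
  rw [Det, show Matrix.of (E1 (d := d)) = 1 from rfl, Matrix.det_one]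

/-- Derivative in `t` of `Det (E1 + t • m)` at `t = 0` equals the trace. -/
lemma hasDerivAt_Det_zero (m : Fin d → Fin d → ℝ) :
    HasDerivAt (fun t : ℝ => Det (E1 + t • m)) ((Matrix.of m).trace) 0 := by
  set P : Polynomial ℝ :=
    (1 + (Polynomial.X : Polynomial ℝ) • (Matrix.of m).map ⇑Polynomial.C).det.divX.divX with hP
  have hfun : (fun t : ℝ => Det (E1 + t • m)) =
      fun t => 1 + (Matrix.of m).trace * t + Polynomial.eval t P * t ^ 2 := by
    funext t
    rw [Det_add_smul, Matrix.det_one_add_smul]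
  rw [hfun]
  have h1 : HasDerivAt (fun t : ℝ => 1 + (Matrix.of m).trace * t)
      ((Matrix.of m).trace) 0 := by
    simpa using ((hasDerivAt_id (0 : ℝ)).const_mul ((Matrix.of m).trace)).const_add 1
  have h2 : HasDerivAt (fun t : ℝ => Polynomial.eval t P * t ^ 2)
      (Polynomial.eval 0 (Polynomial.derivative P) * 0 ^ 2
        + Polynomial.eval 0 P * (2 * 0 ^ 1)) 0 :=
    (P.hasDerivAt 0).mul (hasDerivAt_pow 2 0)
  exact (h1.add h2).congr_deriv (by simp)

/-- Chain rule: derivative of `t ↦ Det (E1 + t • m)` at any `t`. -/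
lemma hasDerivAt_Det (m : Fin d → Fin d → ℝ) (t : ℝ) :
    HasDerivAt (fun s : ℝ => Det (E1 + s • m))
      (fderiv ℝ Det (E1 + t • m) m) t := by
  have hpath : HasDerivAt (fun s : ℝ => E1 (d := d) + s • m) m t := by
    simpa using ((hasDerivAt_id t).smul_const m).const_add (E1 (d := d))
  have hDet : HasFDerivAt (Det (d := d)) (fderiv ℝ Det (E1 + t • m)) (E1 + t • m) :=
    (contDiff_Det.differentiable one_ne_zero _).hasFDerivAt
  exact hDet.comp_hasDerivAt t hpath

lemma fderiv_Det_one (m : Fin d → Fin d → ℝ) :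
    fderiv ℝ Det (E1 + (0 : ℝ) • m) m = (Matrix.of m).trace :=
  (hasDerivAt_Det m 0).unique (hasDerivAt_Det_zero m)

end VolShapeAux

open VolShapeAux

set_option maxHeartbeats 1000000 in
/-- Shape derivative of the volume: `d/dt|₀ vol(F_t(Δ)) = ∫_Δ div W dx`. -/
theorem volume_shape_derivative {d : ℕ} (hd : 1 ≤ d)
    (W : EuclideanSpace ℝ (Fin d) → EuclideanSpace ℝ (Fin d))
    (hW : ContDiff ℝ 1 W) (hWc : HasCompactSupport W)
    (Δ : Set (EuclideanSpace ℝ (Fin d))) (hΔm : MeasurableSet Δ)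
    (hΔb : Bornology.IsBounded Δ) :
    HasDerivAt (fun t => (volume ((fun x => x + t • W x) '' Δ)).toReal)
      (∫ x in Δ, divg W x) (0 : ℝ) := by
  classical
  set A : EuclideanSpace ℝ (Fin d) → (EuclideanSpace ℝ (Fin d) →L[ℝ] EuclideanSpace ℝ (Fin d)) :=
    fderiv ℝ W with hA
  set N : EuclideanSpace ℝ (Fin d) → (Fin d → Fin d → ℝ) :=
    fun x i j => A x (EuclideanSpace.single j (1 : ℝ)) i with hN
  have hjacN : ∀ x, jac W x = Matrix.of (N x) := fun x => rfl
  have hA_cont : Continuous A := hW.continuous_fderiv one_ne_zero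
  have hN_cont : Continuous N := by
    refine continuous_pi fun i => continuous_pi fun j => ?_
    exact (EuclideanSpace.proj i).continuous.comp
      ((ContinuousLinearMap.apply ℝ (EuclideanSpace ℝ (Fin d)) (EuclideanSpace.single j (1:ℝ))).continuous.comp
        hA_cont)
  have hN_supp : HasCompactSupport N := by
    refine HasCompactSupport.mono (hWc.fderiv ℝ) ?_
    intro x hx
    simp only [Function.mem_support] at hx ⊢
    intro h0
    apply hx
    funext i j
    simp [hN, hA, h0]
  obtain ⟨R, hR⟩ := hN_supp.exists_bound_of_continuous hN_cont
  have hR0 : 0 ≤ R := le_trans (norm_nonneg (N 0)) (hR 0)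
  -- positivity radius, via the tube lemma
  have hcont_h : Continuous fun p : ℝ × (Fin d → Fin d → ℝ) => Det (E1 + p.1 • p.2) :=
    contDiff_Det.continuous.comp (continuous_const.add (continuous_fst.smul continuous_snd))
  obtain ⟨δ₁, hδ₁pos, hδ₁⟩ : ∃ δ₁ > 0, ∀ t : ℝ, |t| < δ₁ → ∀ m : Fin d → Fin d → ℝ,
      ‖m‖ ≤ R → 0 < Det (E1 + t • m) := by
    have hsub : ({(0 : ℝ)} ×ˢ Metric.closedBall (0 : Fin d → Fin d → ℝ) R) ⊆
        (fun p : ℝ × (Fin d → Fin d → ℝ) => Det (E1 + p.1 • p.2)) ⁻¹' Set.Ioi 0 := by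
      rintro ⟨t, m⟩ ⟨ht, _⟩
      simp only [Set.mem_singleton_iff] at ht
      subst ht
      simp only [Set.mem_preimage]
      have h0 : E1 (d := d) + ((0:ℝ), m).1 • ((0:ℝ), m).2 = E1 := by simp
      rw [Set.mem_Ioi, h0, Det_E1]
      exact one_pos
    obtain ⟨u, v, hu, hv, h0u, hRv, huv⟩ := generalized_tube_lemma isCompact_singleton
      (isCompact_closedBall (0 : Fin d → Fin d → ℝ) R)
      (hcont_h.isOpen_preimage _ isOpen_Ioi) hsub
    obtain ⟨δ₁, hδ₁pos, hball⟩ := Metric.isOpen_iff.1 hu 0 (h0u rfl)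
    refine ⟨δ₁, hδ₁pos, fun t ht m hm => ?_⟩
    have hmem : (t, m) ∈ u ×ˢ v := by
      constructor
      · exact hball (by simpa [Real.dist_eq] using ht)
      · exact hRv (by simpa [Metric.mem_closedBall, dist_zero_right] using hm)
    exact huv hmem
  -- injectivity radius
  obtain ⟨L, hL⟩ := hW.lipschitzWith_of_hasCompactSupport hWc one_ne_zero
  set δ₂ : ℝ := ((L : ℝ) + 1)⁻¹ with hδ₂
  have hLpos : (0:ℝ) < (L : ℝ) + 1 := by positivity
  have hδ₂pos : 0 < δ₂ := by positivity
  have hinj : ∀ t : ℝ, |t| < δ₂ → Set.InjOn (fun x => x + t • W x) Δ := by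
    intro t ht x _ y _ hxy
    simp only at hxy
    have hsub : x - y = t • (W y - W x) := by
      rw [smul_sub]
      rw [sub_eq_sub_iff_add_eq_add]
      rw [hxy]
      abel
    have hnorm : ‖x - y‖ ≤ |t| * ((L : ℝ) * ‖x - y‖) := by
      calc ‖x - y‖ = |t| * ‖W y - W x‖ := by
            rw [hsub, norm_smul, Real.norm_eq_abs]
        _ ≤ |t| * ((L : ℝ) * ‖x - y‖) := by
            refine mul_le_mul_of_nonneg_left ?_ (abs_nonneg t)
            have h := hL.dist_le_mul y x
            rw [dist_eq_norm, dist_eq_norm] at h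
            rw [norm_sub_rev y x] at h
            exact h
    have hlt : |t| * (L : ℝ) < 1 := by
      have h1 : |t| * ((L : ℝ) + 1) < 1 := by
        have := (mul_lt_mul_of_pos_right ht hLpos)
        rwa [hδ₂, inv_mul_cancel₀ hLpos.ne'] at this
      nlinarith [abs_nonneg t]
    have hz : ‖x - y‖ = 0 := by nlinarith [norm_nonneg (x - y)]
    exact sub_eq_zero.mp (norm_eq_zero.mp hz)
  -- determinant of the CLM derivative, in pi-type terms
  have hdet_clm : ∀ t : ℝ, ∀ x : EuclideanSpace ℝ (Fin d),
      (ContinuousLinearMap.id ℝ (EuclideanSpace ℝ (Fin d)) + t • A x).det = Det (E1 + t • N x) := by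
    intro t x
    set b := (EuclideanSpace.basisFun (Fin d) ℝ).toBasis with hb
    have hrepr : ∀ (y : EuclideanSpace ℝ (Fin d)) (i : Fin d), b.repr y i = y i := fun y i => by
      rw [hb, OrthonormalBasis.coe_toBasis_repr_apply, EuclideanSpace.basisFun_repr]
    have hbj : ∀ j, b j = EuclideanSpace.single j (1:ℝ) := fun j => by
      rw [hb, OrthonormalBasis.coe_toBasis, EuclideanSpace.basisFun_apply]
    have hmat : LinearMap.toMatrix b b
        ((ContinuousLinearMap.id ℝ (EuclideanSpace ℝ (Fin d)) + t • A x : EuclideanSpace ℝ (Fin d) →L[ℝ] EuclideanSpace ℝ (Fin d)) : EuclideanSpace ℝ (Fin d) →ₗ[ℝ] EuclideanSpace ℝ (Fin d))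
        = 1 + t • Matrix.of (N x) := by
      ext i j
      rw [LinearMap.toMatrix_apply, hrepr]
      have happ : ((ContinuousLinearMap.id ℝ (EuclideanSpace ℝ (Fin d)) + t • A x : EuclideanSpace ℝ (Fin d) →L[ℝ] EuclideanSpace ℝ (Fin d)) : EuclideanSpace ℝ (Fin d) →ₗ[ℝ] EuclideanSpace ℝ (Fin d)) (b j)
          = b j + t • A x (b j) := rfl
      rw [happ, hbj]
      have : (EuclideanSpace.single j (1:ℝ) + t • A x (EuclideanSpace.single j (1:ℝ))) i
          = (EuclideanSpace.single j (1:ℝ)) i + t * N x i j := rfl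
      rw [this]
      rw [EuclideanSpace.single_apply]
      simp only [Matrix.add_apply, Matrix.one_apply, Matrix.smul_apply, Matrix.of_apply,
        smul_eq_mul]
    calc (ContinuousLinearMap.id ℝ (EuclideanSpace ℝ (Fin d)) + t • A x).det
        = LinearMap.det
            ((ContinuousLinearMap.id ℝ (EuclideanSpace ℝ (Fin d)) + t • A x : EuclideanSpace ℝ (Fin d) →L[ℝ] EuclideanSpace ℝ (Fin d)) : EuclideanSpace ℝ (Fin d) →ₗ[ℝ] EuclideanSpace ℝ (Fin d)) := rfl
      _ = (LinearMap.toMatrix b b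
            ((ContinuousLinearMap.id ℝ (EuclideanSpace ℝ (Fin d)) + t • A x : EuclideanSpace ℝ (Fin d) →L[ℝ] EuclideanSpace ℝ (Fin d)) : EuclideanSpace ℝ (Fin d) →ₗ[ℝ] EuclideanSpace ℝ (Fin d))).det :=
          (LinearMap.det_toMatrix b _).symm
      _ = (1 + t • Matrix.of (N x)).det := by rw [hmat]
      _ = Det (E1 + t • N x) := (Det_add_smul t (N x)).symm
  -- finite measure
  have hμΔ : volume Δ < ⊤ := hΔb.measure_lt_top
  -- the smoothed family and its derivative
  set F : ℝ → EuclideanSpace ℝ (Fin d) → ℝ := fun t x => Det (E1 + t • N x) with hF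
  set F' : ℝ → EuclideanSpace ℝ (Fin d) → ℝ := fun t x => fderiv ℝ Det (E1 + t • N x) (N x) with hF'
  have hFt_cont : ∀ t, Continuous (F t) := fun t =>
    contDiff_Det.continuous.comp (continuous_const.add (hN_cont.const_smul t))
  -- bound on the derivative
  set K' : Set (Fin d → Fin d → ℝ) :=
    (fun p : ℝ × (Fin d → Fin d → ℝ) => E1 + p.1 • p.2) ''
      (Set.Icc (-1:ℝ) 1 ×ˢ Metric.closedBall 0 R) with hK'
  have hK'c : IsCompact K' :=
    ((isCompact_Icc).prod (isCompact_closedBall _ _)).image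
      (continuous_const.add (continuous_fst.smul continuous_snd))
  obtain ⟨K, hK⟩ := hK'c.exists_bound_of_continuousOn
    ((contDiff_Det.continuous_fderiv one_ne_zero).continuousOn)
  have hbound : ∀ t : ℝ, t ∈ Metric.ball (0:ℝ) 1 → ∀ x, ‖F' t x‖ ≤ K * R := by
    intro t ht x
    have hmem : E1 + t • N x ∈ K' := by
      refine ⟨(t, N x), ?_, rfl⟩
      constructor
      · rw [Metric.mem_ball, Real.dist_eq, sub_zero] at ht
        exact Set.mem_Icc.2 ⟨neg_le_of_abs_le ht.le, le_of_abs_le ht.le⟩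
      · exact Metric.mem_closedBall.2 (by simpa [dist_zero_right] using hR x)
    have h1 : ‖F' t x‖ ≤ ‖fderiv ℝ Det (E1 + t • N x)‖ * ‖N x‖ :=
      ContinuousLinearMap.le_opNorm _ _
    have h2 : ‖fderiv ℝ Det (E1 + t • N x)‖ ≤ K := hK _ hmem
    calc ‖F' t x‖ ≤ ‖fderiv ℝ Det (E1 + t • N x)‖ * ‖N x‖ := h1
      _ ≤ K * R := mul_le_mul h2 (hR x) (norm_nonneg _) ((norm_nonneg _).trans h2)
  -- differentiate under the integral sign
  have key := hasDerivAt_integral_of_dominated_loc_of_deriv_le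
    (μ := volume.restrict Δ) (F := F) (F' := F') (x₀ := (0:ℝ))
    (bound := fun _ => K * R) (Metric.ball_mem_nhds (0:ℝ) one_pos)
    (Eventually.of_forall fun t => (hFt_cont t).aestronglyMeasurable)
    (by
      have hF0 : F 0 = fun _ => (1:ℝ) := by
        funext x
        simp [hF, Det_add_smul]
      rw [hF0]
      exact integrableOn_const hμΔ.ne)
    (by
      have : Continuous (F' 0) := by
        refine isBoundedBilinearMap_apply.continuous.comp (Continuous.prodMk ?_ hN_cont)
        exact (contDiff_Det.continuous_fderiv one_ne_zero).comp
          (continuous_const.add (hN_cont.const_smul (0:ℝ)))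
      exact this.aestronglyMeasurable)
    (Eventually.of_forall fun x t ht => hbound t ht x)
    (integrableOn_const hμΔ.ne)
    (Eventually.of_forall fun x t _ => hasDerivAt_Det (N x) t)
  obtain ⟨-, hψ⟩ := key
  have hint : ∫ x in Δ, F' 0 x = ∫ x in Δ, divg W x := by
    refine integral_congr_ae (Eventually.of_forall fun x => ?_)
    show fderiv ℝ Det (E1 + (0:ℝ) • N x) (N x) = divg W x
    rw [fderiv_Det_one]
    rw [divg, hjacN]
  rw [hint] at hψ
  -- eventual equality of the two functions near `t = 0`
  refine hψ.congr_of_eventuallyEq ?_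
  have hnhds : ∀ᶠ t in 𝓝 (0:ℝ), |t| < min δ₁ δ₂ := by
    have hb := Metric.ball_mem_nhds (0:ℝ) (lt_min hδ₁pos hδ₂pos)
    filter_upwards [hb] with t ht
    simpa [Real.dist_eq] using ht
  filter_upwards [hnhds] with t ht
  have ht₁ : |t| < δ₁ := lt_of_lt_of_le ht (min_le_left _ _)
  have ht₂ : |t| < δ₂ := lt_of_lt_of_le ht (min_le_right _ _)
  have hpos : ∀ x : EuclideanSpace ℝ (Fin d), 0 < Det (E1 + t • N x) := fun x => hδ₁ t ht₁ (N x) (hR x)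
  -- change of variables
  have hder : ∀ x ∈ Δ, HasFDerivWithinAt (fun x => x + t • W x)
      (ContinuousLinearMap.id ℝ (EuclideanSpace ℝ (Fin d)) + t • A x) Δ x := by
    intro x _
    exact ((hasFDerivAt_id x).add
      (((hW.differentiable one_ne_zero x).hasFDerivAt).const_smul t)).hasFDerivWithinAt
  have hcov := lintegral_abs_det_fderiv_eq_addHaar_image volume hΔm hder (hinj t ht₂)
  have hlin : (∫⁻ x in Δ, ENNReal.ofReal |(ContinuousLinearMap.id ℝ (EuclideanSpace ℝ (Fin d)) + t • A x).det|) =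
      ∫⁻ x in Δ, ENNReal.ofReal (F t x) := by
    refine lintegral_congr fun x => ?_
    rw [hdet_clm, abs_of_pos (hpos x)]
  have hB : ∫ x in Δ, F t x = (∫⁻ x in Δ, ENNReal.ofReal (F t x)).toReal :=
    integral_eq_lintegral_of_nonneg_ae (Eventually.of_forall fun x => (hpos x).le)
      (hFt_cont t).aestronglyMeasurable
  calc (volume ((fun x => x + t • W x) '' Δ)).toReal
      = (∫⁻ x in Δ, ENNReal.ofReal |(ContinuousLinearMap.id ℝ (EuclideanSpace ℝ (Fin d)) + t • A x).det|).toReal := by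
        rw [hcov]
    _ = (∫⁻ x in Δ, ENNReal.ofReal (F t x)).toReal := by rw [hlin]
    _ = ∫ x in Δ, F t x := hB.symm
end

section
/- Let d ≥ 1, let W : ℝ^d → ℝ^d be continuously differentiable with compact support, and let Δ ⊂ ℝ^d be a bounded measurable set. Then the ℝ^d-valued map t ↦ ∫_{F_t(Δ)} y dy is differentiable at t = 0 and d/dt|_{t=0} ∫_{F_t(Δ)} y dy = ∫_Δ ( W(x) + div W(x) · x ) dx. -/
open MeasureTheory

open Matrix Polynomial in
lemma hasDerivAt_det_one_add_smul_zero {d : ℕ} (M : Matrix (Fin d) (Fin d) ℝ) :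
    HasDerivAt (fun t : ℝ => (1 + t • M).det) M.trace 0 := by
  have h : (fun t : ℝ => (1 + t • M).det)
      = fun t => 1 + M.trace * t + (det (1 + (X : ℝ[X]) • M.map C)).divX.divX.eval t * t ^ 2 := by
    funext t; rw [Matrix.det_one_add_smul]
  rw [h]
  have h1 : HasDerivAt (fun t : ℝ => 1 + M.trace * t) M.trace 0 := by
    simpa using ((hasDerivAt_id (0:ℝ)).const_mul M.trace).const_add 1
  have h2 : HasDerivAt
      (fun t : ℝ => (det (1 + (X : ℝ[X]) • M.map C)).divX.divX.eval t * t ^ 2) 0 0 := by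
    have := (Polynomial.hasDerivAt (det (1 + (X : ℝ[X]) • M.map C)).divX.divX (0:ℝ)).mul
      (hasDerivAt_pow 2 (0:ℝ))
    simpa [Pi.mul_def] using this
  simpa [Pi.add_def] using h1.add h2

open Matrix in
lemma hasDerivAt_det_one_add_smul_s4 {d : ℕ} (M : Matrix (Fin d) (Fin d) ℝ) (t₀ : ℝ)
    (h : IsUnit (1 + t₀ • M).det) :
    HasDerivAt (fun t : ℝ => (1 + t • M).det)
      ((1 + t₀ • M).det * ((1 + t₀ • M)⁻¹ * M).trace) t₀ := by
  set A := 1 + t₀ • M with hA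
  have key : ∀ t : ℝ, (1 : Matrix (Fin d) (Fin d) ℝ) + t • M
      = A * (1 + (t - t₀) • (A⁻¹ * M)) := by
    intro t
    rw [Matrix.mul_add, mul_one, Matrix.mul_smul, ← Matrix.mul_assoc,
      Matrix.mul_nonsing_inv A h, one_mul, hA, sub_smul]
    abel
  have h0 : HasDerivAt (fun s : ℝ => A.det * (1 + s • (A⁻¹ * M)).det)
      (A.det * (A⁻¹ * M).trace) 0 :=
    (hasDerivAt_det_one_add_smul_zero _).const_mul _
  have h1 : HasDerivAt (fun t : ℝ => A.det * (1 + (t - t₀) • (A⁻¹ * M)).det)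
      (A.det * (A⁻¹ * M).trace) t₀ := by
    have h0' : HasDerivAt (fun s : ℝ => A.det * (1 + s • (A⁻¹ * M)).det)
        (A.det * (A⁻¹ * M).trace) (t₀ - t₀) := by
      rw [sub_self]; exact h0
    exact h0'.comp_sub_const t₀ t₀
  have heq : (fun t : ℝ => (1 + t • M).det)
      = fun t : ℝ => A.det * (1 + (t - t₀) • (A⁻¹ * M)).det := by
    funext t; rw [key t, Matrix.det_mul]
  rw [heq]; exact h1

set_option maxHeartbeats 2000000 in
/-- Shape derivative of the first moment:
`d/dt|₀ ∫_{F_t(Δ)} y dy = ∫_Δ (W(x) + div W(x) • x) dx`. -/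
theorem first_moment_shape_derivative {d : ℕ} (hd : 1 ≤ d)
    (W : EuclideanSpace ℝ (Fin d) → EuclideanSpace ℝ (Fin d))
    (hW : ContDiff ℝ 1 W) (hWc : HasCompactSupport W)
    (Δ : Set (EuclideanSpace ℝ (Fin d))) (hΔm : MeasurableSet Δ)
    (hΔb : Bornology.IsBounded Δ) :
    HasDerivAt (fun t : ℝ => ∫ y in (fun x => x + t • W x) '' Δ, y)
      (∫ x in Δ, (W x + divg W x • x)) (0 : ℝ) := by
  classical
  have hWd : Differentiable ℝ W := hW.differentiable one_ne_zero
  have hB'c : Continuous (fderiv ℝ W) := hW.continuous_fderiv one_ne_zero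
  obtain ⟨L, hL⟩ := (hWc.fderiv (𝕜 := ℝ)).exists_bound_of_continuous hB'c
  obtain ⟨K, hK⟩ := hW.lipschitzWith_of_hasCompactSupport hWc one_ne_zero
  set R : ℝ := max L K + 1 with hRdef
  have hR0 : 0 < R := by
    have h1 : (0:ℝ) ≤ K := K.coe_nonneg
    have h2 := le_max_right L (K:ℝ)
    simp only [hRdef]; linarith
  set ε : ℝ := 1 / (2 * R) with hεdef
  have hε0 : 0 < ε := by positivity
  have hsmall : ∀ t c : ℝ, |t| ≤ ε → 0 ≤ c → c ≤ R → |t| * c ≤ 1/2 := by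
    intro t c ht hc hcR
    have h1 : |t| * c ≤ ε * R :=
      mul_le_mul ht hcR hc (le_of_lt hε0)
    have h2 : ε * R = 1/2 := by rw [hεdef]; field_simp
    exact h1.trans_eq h2
  have hLR : ∀ x, ‖fderiv ℝ W x‖ ≤ R := by
    intro x
    have := hL x
    have h2 := le_max_left L (K:ℝ)
    simp only [hRdef]; linarith
  have hKR : (K:ℝ) ≤ R := by
    have := le_max_right L (K:ℝ); simp only [hRdef]; linarith
  -- Injectivity of the perturbation of identity
  have hinj : ∀ t : ℝ, |t| ≤ ε → Function.Injective
      (fun x : EuclideanSpace ℝ (Fin d) => x + t • W x) := by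
    intro t ht x y hxy
    simp only at hxy
    have hsub : x - y = t • W y - t • W x := by
      rw [sub_eq_sub_iff_add_eq_add, hxy]; exact add_comm _ _
    have h1 : ‖x - y‖ = |t| * ‖W y - W x‖ := by
      rw [hsub, ← smul_sub, norm_smul, Real.norm_eq_abs]
    have h2 : ‖W y - W x‖ ≤ K * ‖y - x‖ := by
      have := hK.dist_le_mul y x
      rwa [dist_eq_norm, dist_eq_norm] at this
    have h3 : ‖y - x‖ = ‖x - y‖ := norm_sub_rev _ _
    have h4 : |t| * (K : ℝ) ≤ 1/2 := hsmall t K ht K.coe_nonneg hKR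
    have h5 : ‖x - y‖ ≤ (1/2) * ‖x - y‖ := by
      calc ‖x - y‖ = |t| * ‖W y - W x‖ := h1
        _ ≤ |t| * (K * ‖x - y‖) := by
            apply mul_le_mul_of_nonneg_left _ (abs_nonneg t)
            rw [← h3]; exact h2
        _ = (|t| * K) * ‖x - y‖ := by ring
        _ ≤ (1/2) * ‖x - y‖ :=
            mul_le_mul_of_nonneg_right h4 (norm_nonneg _)
    have h6 : ‖x - y‖ = 0 := by nlinarith [norm_nonneg (x - y)]
    have := norm_eq_zero.mp h6
    exact sub_eq_zero.mp this
  -- the basis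
  set bE := (EuclideanSpace.basisFun (Fin d) ℝ).toBasis with hbE
  -- Matrix of the derivative
  have hMat : ∀ (t : ℝ) (x : EuclideanSpace ℝ (Fin d)),
      LinearMap.toMatrix bE bE
        ((ContinuousLinearMap.id ℝ (EuclideanSpace ℝ (Fin d)) + t • fderiv ℝ W x :
          EuclideanSpace ℝ (Fin d) →L[ℝ] EuclideanSpace ℝ (Fin d)) :
          EuclideanSpace ℝ (Fin d) →ₗ[ℝ] EuclideanSpace ℝ (Fin d))
        = 1 + t • jac W x := by
    intro t x
    ext i j
    rw [LinearMap.toMatrix_apply]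
    simp only [hbE, OrthonormalBasis.coe_toBasis, EuclideanSpace.basisFun_apply,
      OrthonormalBasis.coe_toBasis_repr_apply, EuclideanSpace.basisFun_repr,
      ContinuousLinearMap.coe_coe, ContinuousLinearMap.add_apply,
      ContinuousLinearMap.coe_id', id_eq, ContinuousLinearMap.coe_smul',
      Pi.smul_apply, Matrix.add_apply, Matrix.smul_apply, Matrix.one_apply, jac,
      Matrix.of_apply, PiLp.add_apply, PiLp.smul_apply, smul_eq_mul,
      EuclideanSpace.single_apply]
  -- determinant of the continuous linear map
  have hdetCLM : ∀ (t : ℝ) (x : EuclideanSpace ℝ (Fin d)),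
      (ContinuousLinearMap.id ℝ (EuclideanSpace ℝ (Fin d)) + t • fderiv ℝ W x :
        EuclideanSpace ℝ (Fin d) →L[ℝ] EuclideanSpace ℝ (Fin d)).det
        = (1 + t • jac W x).det := by
    intro t x
    show LinearMap.det
      ((ContinuousLinearMap.id ℝ (EuclideanSpace ℝ (Fin d)) + t • fderiv ℝ W x :
        EuclideanSpace ℝ (Fin d) →L[ℝ] EuclideanSpace ℝ (Fin d)) :
        EuclideanSpace ℝ (Fin d) →ₗ[ℝ] EuclideanSpace ℝ (Fin d)) = _
    rw [← LinearMap.det_toMatrix bE, hMat]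
  -- invertibility
  have hunit : ∀ t : ℝ, |t| ≤ ε → ∀ x, IsUnit (1 + t • jac W x).det := by
    intro t ht x
    set A : EuclideanSpace ℝ (Fin d) →L[ℝ] EuclideanSpace ℝ (Fin d) :=
      ContinuousLinearMap.id ℝ (EuclideanSpace ℝ (Fin d)) + t • fderiv ℝ W x with hAdef
    have hAinj : Function.Injective
        ((A : EuclideanSpace ℝ (Fin d) →ₗ[ℝ] EuclideanSpace ℝ (Fin d))) := by
      intro u v huv
      have h0 : A (u - v) = 0 := by
        have : A u = A v := huv
        rw [map_sub, this, sub_self]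
      have h0' : (u - v) + t • fderiv ℝ W x (u - v) = 0 := by
        simpa [hAdef] using h0
      have h1 : ‖u - v‖ = ‖t • fderiv ℝ W x (u - v)‖ := by
        have h := congrArg Norm.norm (eq_neg_of_add_eq_zero_left h0')
        rwa [norm_neg] at h
      have h2 : ‖t • fderiv ℝ W x (u - v)‖ ≤ (1/2) * ‖u - v‖ := by
        rw [norm_smul, Real.norm_eq_abs]
        calc |t| * ‖fderiv ℝ W x (u - v)‖
            ≤ |t| * (‖fderiv ℝ W x‖ * ‖u - v‖) := by
              apply mul_le_mul_of_nonneg_left ((fderiv ℝ W x).le_opNorm _) (abs_nonneg t)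
          _ = (|t| * ‖fderiv ℝ W x‖) * ‖u - v‖ := by ring
          _ ≤ (1/2) * ‖u - v‖ := by
              apply mul_le_mul_of_nonneg_right _ (norm_nonneg _)
              exact hsmall t _ ht (norm_nonneg _) (hLR x)
      have h3 : ‖u - v‖ = 0 := by nlinarith [norm_nonneg (u - v)]
      exact sub_eq_zero.mp (norm_eq_zero.mp h3)
    have hdet : IsUnit (LinearMap.det
        ((A : EuclideanSpace ℝ (Fin d) →ₗ[ℝ] EuclideanSpace ℝ (Fin d)))) := by
      have := (LinearEquiv.ofInjectiveEndo
        ((A : EuclideanSpace ℝ (Fin d) →ₗ[ℝ] EuclideanSpace ℝ (Fin d))) hAinj).isUnit_det'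
      exact this
    have := hdetCLM t x
    rw [ContinuousLinearMap.det, ← hAdef] at this
    rwa [← this]
  -- positivity of the determinant
  have hpos : ∀ t : ℝ, |t| ≤ ε → ∀ x, 0 < (1 + t • jac W x).det := by
    intro t ht x
    by_contra hle
    push_neg at hle
    have hne := (hunit t ht x).ne_zero
    have hlt : (1 + t • jac W x).det < 0 := lt_of_le_of_ne hle hne
    have hcont : ContinuousOn (fun s : ℝ => (1 + s • jac W x).det) (Set.uIcc 0 t) :=
      (Continuous.matrix_det
        (continuous_const.add (continuous_id.smul continuous_const))).continuousOn
    have h0mem : (0:ℝ) ∈ Set.uIcc ((fun s : ℝ => (1 + s • jac W x).det) 0)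
        ((fun s : ℝ => (1 + s • jac W x).det) t) := by
      simp only [zero_smul, add_zero, Matrix.det_one]
      rw [Set.mem_uIcc]
      right
      exact ⟨le_of_lt hlt, zero_le_one⟩
    obtain ⟨s, hs, hfs⟩ := intermediate_value_uIcc hcont h0mem
    have hsle : |s| ≤ |t| := by
      rcases Set.mem_uIcc.mp hs with ⟨h1, h2⟩ | ⟨h1, h2⟩
      · rw [abs_of_nonneg h1]; exact h2.trans (le_abs_self t)
      · rw [abs_of_nonpos h2]; linarith [neg_abs_le t]
    exact (hunit s (hsle.trans ht) x).ne_zero hfs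
  -- continuity of the jacobian matrix
  have hBc : Continuous fun x => jac W x := by
    apply continuous_matrix
    intro i j
    show Continuous fun x => fderiv ℝ W x (EuclideanSpace.single j (1:ℝ)) i
    exact (EuclideanSpace.proj i).continuous.comp
      ((ContinuousLinearMap.apply ℝ (EuclideanSpace ℝ (Fin d))
        (EuclideanSpace.single j (1:ℝ))).continuous.comp hB'c)
  -- joint continuity
  have hGc : Continuous fun p : ℝ × EuclideanSpace ℝ (Fin d) =>
      ((1 : Matrix (Fin d) (Fin d) ℝ) + p.1 • jac W p.2) :=
    continuous_const.add (continuous_fst.smul (hBc.comp continuous_snd))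
  have htr : Continuous (Matrix.trace : Matrix (Fin d) (Fin d) ℝ → ℝ) :=
    continuous_id.matrix_trace
  -- compact set and bound
  have hKc : IsCompact ((Set.Icc (-ε) ε) ×ˢ closure Δ) :=
    isCompact_Icc.prod hΔb.isCompact_closure
  have hF'c : ContinuousOn (fun p : ℝ × EuclideanSpace ℝ (Fin d) =>
      ((1 + p.1 • jac W p.2).det * (((1 + p.1 • jac W p.2))⁻¹ * jac W p.2).trace)
        • (p.2 + p.1 • W p.2) + (1 + p.1 • jac W p.2).det • W p.2)
      ((Set.Icc (-ε) ε) ×ˢ closure Δ) := by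
    intro p hp
    apply ContinuousAt.continuousWithinAt
    have hpt : |p.1| ≤ ε := by
      rcases hp with ⟨h1, h2⟩
      rw [abs_le]; exact ⟨(Set.mem_Icc.mp h1).1, (Set.mem_Icc.mp h1).2⟩
    have hdetne : (1 + p.1 • jac W p.2).det ≠ 0 := (hunit p.1 hpt p.2).ne_zero
    have hdetAt : ContinuousAt (fun p : ℝ × EuclideanSpace ℝ (Fin d) =>
        (1 + p.1 • jac W p.2).det) p := hGc.matrix_det.continuousAt
    have hinvAt : ContinuousAt (fun p : ℝ × EuclideanSpace ℝ (Fin d) =>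
        (1 + p.1 • jac W p.2)⁻¹) p := by
      apply ContinuousAt.comp (continuousAt_matrix_inv _ ?_) hGc.continuousAt
      rw [Ring.inverse_eq_inv']
      exact continuousAt_inv₀ hdetne
    have hmulAt : ContinuousAt (fun p : ℝ × EuclideanSpace ℝ (Fin d) =>
        (1 + p.1 • jac W p.2)⁻¹ * jac W p.2) p := by
      have hm : Continuous fun q : Matrix (Fin d) (Fin d) ℝ × Matrix (Fin d) (Fin d) ℝ =>
          q.1 * q.2 := continuous_mul
      exact hm.continuousAt.comp (hinvAt.prodMk (hBc.comp continuous_snd).continuousAt)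
    have htrAt : ContinuousAt (fun p : ℝ × EuclideanSpace ℝ (Fin d) =>
        ((1 + p.1 • jac W p.2)⁻¹ * jac W p.2).trace) p :=
      htr.continuousAt.comp hmulAt
    have hvAt : ContinuousAt (fun p : ℝ × EuclideanSpace ℝ (Fin d) =>
        p.2 + p.1 • W p.2) p :=
      (continuous_snd.add (continuous_fst.smul (hW.continuous.comp continuous_snd))).continuousAt
    exact ((hdetAt.mul htrAt).smul hvAt).add
      (hdetAt.smul ((hW.continuous.comp continuous_snd).continuousAt))
  obtain ⟨Cb, hCb⟩ := hKc.exists_bound_of_continuousOn hF'c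
  -- measure
  haveI hfin : IsFiniteMeasure (volume.restrict Δ) := by
    constructor
    rw [Measure.restrict_apply_univ]
    exact lt_of_le_of_lt (measure_mono subset_closure) hΔb.isCompact_closure.measure_lt_top
  -- hypotheses for differentiation under the integral sign
  have hFmeas : ∀ᶠ t in nhds (0:ℝ), AEStronglyMeasurable
      (fun x => (1 + t • jac W x).det • (x + t • W x)) (volume.restrict Δ) := by
    apply Filter.Eventually.of_forall
    intro t
    exact (show Continuous (fun x => (1 + t • jac W x).det • (x + t • W x)) from Continuous.smul (f := fun x => (1 + t • jac W x).det) (g := fun x => x + t • W x) ((continuous_const.add (hBc.const_smul t)).matrix_det)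
      (continuous_id.add (hW.continuous.const_smul t))).aestronglyMeasurable
  have hFint : Integrable (fun x => (1 + (0:ℝ) • jac W x).det •
      (x + (0:ℝ) • W x)) (volume.restrict Δ) := by
    have hid : (fun x : EuclideanSpace ℝ (Fin d) => (1 + (0:ℝ) • jac W x).det •
        (x + (0:ℝ) • W x)) = fun x => x := by
      funext x; simp [Matrix.det_one]
    rw [hid]
    exact (continuous_id.continuousOn.integrableOn_compact
      hΔb.isCompact_closure).mono_set subset_closure
  have hsimp : (fun x : EuclideanSpace ℝ (Fin d) =>
      ((1 + (0:ℝ) • jac W x).det * (((1 + (0:ℝ) • jac W x))⁻¹ * jac W x).trace)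
        • (x + (0:ℝ) • W x) + (1 + (0:ℝ) • jac W x).det • W x)
      = fun x => (jac W x).trace • x + W x := by
    funext x
    rw [show (1 : Matrix (Fin d) (Fin d) ℝ) + (0:ℝ) • jac W x = 1 by simp]
    rw [show (1 : Matrix (Fin d) (Fin d) ℝ)⁻¹ = 1 by
      rw [Matrix.inv_eq_left_inv]; simp]
    simp [Matrix.det_one]
  have hF'meas : AEStronglyMeasurable (fun x : EuclideanSpace ℝ (Fin d) =>
      ((1 + (0:ℝ) • jac W x).det * (((1 + (0:ℝ) • jac W x))⁻¹ * jac W x).trace)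
        • (x + (0:ℝ) • W x) + (1 + (0:ℝ) • jac W x).det • W x) (volume.restrict Δ) := by
    rw [hsimp]
    exact (((htr.comp hBc).smul continuous_id).add hW.continuous).aestronglyMeasurable
  have hbound : ∀ᵐ x ∂(volume.restrict Δ), ∀ t ∈ Metric.ball (0:ℝ) ε,
      ‖((1 + t • jac W x).det * (((1 + t • jac W x))⁻¹ * jac W x).trace)
        • (x + t • W x) + (1 + t • jac W x).det • W x‖ ≤ Cb := by
    filter_upwards [ae_restrict_mem hΔm] with x hx
    intro t ht
    have ht' : |t| ≤ ε := by
      rw [Metric.mem_ball, Real.dist_eq, sub_zero] at ht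
      exact le_of_lt ht
    exact hCb (t, x) ⟨Set.mem_Icc.mpr (abs_le.mp ht'), subset_closure hx⟩
  have hbint : Integrable (fun _ : EuclideanSpace ℝ (Fin d) => Cb) (volume.restrict Δ) :=
    integrable_const _
  have hdiff : ∀ᵐ x ∂(volume.restrict Δ), ∀ t ∈ Metric.ball (0:ℝ) ε,
      HasDerivAt (fun t : ℝ => (1 + t • jac W x).det • (x + t • W x))
        (((1 + t • jac W x).det * (((1 + t • jac W x))⁻¹ * jac W x).trace)
          • (x + t • W x) + (1 + t • jac W x).det • W x) t := by
    apply Filter.Eventually.of_forall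
    intro x t ht
    have ht' : |t| ≤ ε := by
      rw [Metric.mem_ball, Real.dist_eq, sub_zero] at ht
      exact le_of_lt ht
    have h1 := hasDerivAt_det_one_add_smul_s4 (jac W x) t (hunit t ht' x)
    have h2 : HasDerivAt (fun t : ℝ => x + t • W x) (W x) t := by
      simpa using ((hasDerivAt_id t).smul_const (W x)).const_add x
    have h3 := h1.smul h2
    have hcomm : (1 + t • jac W x).det • W x +
        ((1 + t • jac W x).det * (((1 + t • jac W x))⁻¹ * jac W x).trace) • (x + t • W x)
        = ((1 + t • jac W x).det * (((1 + t • jac W x))⁻¹ * jac W x).trace)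
          • (x + t • W x) + (1 + t • jac W x).det • W x := add_comm _ _
    rw [← hcomm]
    exact h3
  -- differentiation under the integral sign
  have key := (hasDerivAt_integral_of_dominated_loc_of_deriv_le
      (μ := volume.restrict Δ)
      (F := fun (t : ℝ) (x : EuclideanSpace ℝ (Fin d)) => (1 + t • jac W x).det • (x + t • W x))
      (F' := fun (t : ℝ) (x : EuclideanSpace ℝ (Fin d)) =>
        ((1 + t • jac W x).det * (((1 + t • jac W x))⁻¹ * jac W x).trace)
          • (x + t • W x) + (1 + t • jac W x).det • W x)
      (bound := fun _ => Cb)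
      (Metric.ball_mem_nhds (0:ℝ) hε0) hFmeas hFint hF'meas hbound hbint hdiff).2
  rw [hsimp] at key
  -- identify the value of the derivative
  have hval : (∫ x in Δ, (W x + divg W x • x))
      = ∫ x, ((jac W x).trace • x + W x) ∂(volume.restrict Δ) := by
    apply integral_congr_ae
    apply Filter.Eventually.of_forall
    intro x
    show W x + divg W x • x = (jac W x).trace • x + W x
    rw [divg, add_comm]
  rw [hval]
  -- eventual equality with the integral over the perturbed domain
  apply key.congr_of_eventuallyEq
  filter_upwards [Metric.ball_mem_nhds (0:ℝ) hε0] with t ht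
  have ht' : |t| ≤ ε := by
    rw [Metric.mem_ball, Real.dist_eq, sub_zero] at ht
    exact le_of_lt ht
  have hfd : ∀ x ∈ Δ, HasFDerivWithinAt (fun x => x + t • W x)
      ((ContinuousLinearMap.id ℝ (EuclideanSpace ℝ (Fin d)) + t • fderiv ℝ W x)) Δ x := by
    intro x _
    apply HasFDerivAt.hasFDerivWithinAt
    have := (hasFDerivAt_id x).add (((hWd x).hasFDerivAt).const_smul t)
    exact this
  rw [integral_image_eq_integral_abs_det_fderiv_smul volume hΔm hfd
    ((hinj t ht').injOn) (fun y => y)]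
  apply integral_congr_ae
  apply Filter.Eventually.of_forall
  intro x
  show |(ContinuousLinearMap.id ℝ (EuclideanSpace ℝ (Fin d)) + t • fderiv ℝ W x).det|
      • (x + t • W x) = (1 + t • jac W x).det • (x + t • W x)
  rw [hdetCLM t x, abs_of_pos (hpos t ht' x)]
end

section
/- Let d ≥ 1, let W : ℝ^d → ℝ^d be continuously differentiable with compact support, let Δ ⊂ ℝ^d be a bounded measurable set, and let q : ℝ^d → ℝ be continuously differentiable (independent of t). Then the map t ↦ ∫_{F_t(Δ)} q(y) dy is differentiable at t = 0 and d/dt|_{t=0} ∫_{F_t(Δ)} q(y) dy = ∫_Δ ( ∇q(x) · W(x) + q(x) div W(x) ) dx. -/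
open MeasureTheory
open scoped RealInnerProductSpace

open Polynomial in
lemma aux_hasDerivAt_det_one_add_smul {n : ℕ} (B : Matrix (Fin n) (Fin n) ℝ) (t : ℝ)
    (h : (1 + t • B).det ≠ 0) :
    HasDerivAt (fun s : ℝ => (1 + s • B).det)
      ((Matrix.adjugate (1 + t • B) * B).trace) t := by
  classical
  set M : Matrix (Fin n) (Fin n) ℝ := 1 + t • B with hM
  have hU : IsUnit M.det := h.isUnit
  have hMinv : M * M⁻¹ = 1 := Matrix.mul_nonsing_inv M hU
  set N : Matrix (Fin n) (Fin n) ℝ := M⁻¹ * B with hN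
  have key : ∀ s : ℝ, (1 + (t + s) • B).det = M.det * (1 + s • N).det := by
    intro s
    have h1 : (1 : Matrix (Fin n) (Fin n) ℝ) + (t + s) • B = M * (1 + s • N) := by
      rw [Matrix.mul_add, mul_one, hN, Matrix.mul_smul, ← Matrix.mul_assoc, hMinv,
        Matrix.one_mul, hM, add_smul]
      abel
    rw [h1, Matrix.det_mul]
  set p : Polynomial ℝ := (Matrix.det (1 + (X : ℝ[X]) • N.map C)).divX.divX with hp
  have expand : ∀ s : ℝ, (1 + s • N).det = 1 + N.trace * s + p.eval s * s ^ 2 :=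
    fun s => Matrix.det_one_add_smul s N
  have hg : HasDerivAt (fun s : ℝ => M.det * (1 + N.trace * s + p.eval s * s ^ 2))
      (M.det * N.trace) 0 := by
    have h2 : HasDerivAt (fun s : ℝ => p.eval s * s ^ 2)
        (p.derivative.eval 0 * 0 ^ 2 + p.eval 0 * ((2 : ℕ) * 0 ^ 1)) 0 :=
      (p.hasDerivAt 0).mul (hasDerivAt_pow 2 0)
    have h3 : HasDerivAt (fun s : ℝ => 1 + N.trace * s + p.eval s * s ^ 2)
        (N.trace) 0 := by
      simpa [Pi.add_def] using (((hasDerivAt_id (0:ℝ)).const_mul N.trace).const_add 1).add h2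
    simpa [mul_comm] using h3.const_mul M.det
  have hf0 : HasDerivAt (fun s : ℝ => (1 + s • B).det) (M.det * N.trace) t := by
    have hcomp : HasDerivAt
        (fun u : ℝ => M.det * (1 + N.trace * (u - t) + p.eval (u - t) * (u - t) ^ 2))
        (M.det * N.trace * 1) t := by
      have hsub : HasDerivAt (fun u : ℝ => u - t) 1 t := (hasDerivAt_id t).sub_const t
      have hg' : HasDerivAt (fun s : ℝ => M.det * (1 + N.trace * s + p.eval s * s ^ 2))
          (M.det * N.trace) ((fun u : ℝ => u - t) t) := by simpa using hg
      simpa [Function.comp_def] using HasDerivAt.comp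
        (h₂ := fun s : ℝ => M.det * (1 + N.trace * s + p.eval s * s ^ 2))
        (h := fun u : ℝ => u - t) t hg' hsub
    have heq : (fun s : ℝ => (1 + s • B).det)
        = fun u : ℝ => M.det * (1 + N.trace * (u - t) + p.eval (u - t) * (u - t) ^ 2) := by
      funext u
      rw [← expand, ← key, add_sub_cancel]
    rw [heq]
    simpa using hcomp
  have htr : M.det * N.trace = (Matrix.adjugate M * B).trace := by
    have hinv : M⁻¹ = (M.det)⁻¹ • Matrix.adjugate M := by
      rw [Matrix.inv_def, Ring.inverse_eq_inv']
    rw [hN, hinv, Matrix.smul_mul, Matrix.trace_smul, smul_eq_mul, ← mul_assoc,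
      mul_inv_cancel₀ h, one_mul]
  rwa [htr] at hf0

lemma aux_det_pos {E : Type*} [NormedAddCommGroup E] [NormedSpace ℝ E] [FiniteDimensional ℝ E]
    [CompleteSpace E] (A : E →L[ℝ] E) {t : ℝ} (h : |t| * ‖A‖ < 1) :
    0 < ContinuousLinearMap.det (1 + t • A) := by
  set f : ℝ → ℝ := fun s => ContinuousLinearMap.det (1 + s • A) with hf
  have hfc : Continuous f := by
    apply ContinuousLinearMap.continuous_det.comp
    exact continuous_const.add (continuous_id.smul continuous_const)
  have hne : ∀ s ∈ Set.uIcc t 0, f s ≠ 0 := by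
    intro s hs
    have hs' : |s| ≤ |t| := by
      rcases Set.mem_uIcc.mp hs with ⟨h1, h2⟩ | ⟨h1, h2⟩ <;> rw [abs_le] <;>
        constructor <;> cases abs_cases t <;> nlinarith
    have hn : ‖-(s • A)‖ < 1 := by
      rw [norm_neg]
      refine lt_of_le_of_lt (norm_smul_le s A) ?_
      rw [Real.norm_eq_abs]
      nlinarith [norm_nonneg A, abs_nonneg s]
    have hu : IsUnit ((1 : E →L[ℝ] E) + s • A) := by
      have := (Units.oneSub (-(s • A)) hn).isUnit
      simpa using this
    obtain ⟨u, hu⟩ := hu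
    have h1 : (1 + s • A : E →L[ℝ] E).det * (↑u⁻¹ : E →L[ℝ] E).det = 1 := by
      rw [← hu]
      show LinearMap.det _ * LinearMap.det _ = 1
      rw [← LinearMap.det_comp, ← ContinuousLinearMap.toLinearMap_comp, ← ContinuousLinearMap.mul_def,
        u.mul_inv]
      simp [ContinuousLinearMap.one_def]
    intro h0
    rw [show f s = (1 + s • A : E →L[ℝ] E).det from rfl] at h0
    rw [h0, zero_mul] at h1
    exact zero_ne_one h1
  have hf0 : f 0 = 1 := by
    have h1 : ((1 : E →L[ℝ] E)).det = 1 := by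
      show LinearMap.det _ = 1
      simp [ContinuousLinearMap.one_def]
    simp [hf, h1]
  by_contra hle
  push_neg at hle
  have h0mem : (0 : ℝ) ∈ Set.uIcc (f t) (f 0) :=
    Set.mem_uIcc.mpr (Or.inl ⟨hle, by rw [hf0]; norm_num⟩)
  obtain ⟨s, hs, hfs⟩ := intermediate_value_uIcc (hfc.continuousOn (s := Set.uIcc t 0)) h0mem
  exact hne s hs hfs

lemma aux_det_eq {d : ℕ} (f : EuclideanSpace ℝ (Fin d) →L[ℝ] EuclideanSpace ℝ (Fin d)) (t : ℝ) :
    ContinuousLinearMap.det (1 + t • f) =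
      ((1 : Matrix (Fin d) (Fin d) ℝ)
        + t • Matrix.of fun i j => f (EuclideanSpace.single j (1:ℝ)) i).det := by
  classical
  set b := (EuclideanSpace.basisFun (Fin d) ℝ).toBasis
  show LinearMap.det _ = _
  rw [← LinearMap.det_toMatrix b]
  congr 1
  ext i j
  rw [LinearMap.toMatrix_apply]
  simp [b, Matrix.add_apply, Matrix.one_apply, Matrix.smul_apply,
    ContinuousLinearMap.coe_coe, EuclideanSpace.basisFun_apply,
    OrthonormalBasis.coe_toBasis_repr_apply, EuclideanSpace.basisFun_repr,
    ContinuousLinearMap.add_apply, ContinuousLinearMap.smul_apply, EuclideanSpace.single_apply]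

/-- Shape derivative of a domain integral with a shape-independent integrand:
`d/dt|₀ ∫_{F_t(Δ)} q(y) dy = ∫_Δ (∇q(x) · W(x) + q(x) div W(x)) dx`. -/
theorem domain_integral_shape_derivative_autonomous {d : ℕ} (hd : 1 ≤ d)
    (W : EuclideanSpace ℝ (Fin d) → EuclideanSpace ℝ (Fin d))
    (hW : ContDiff ℝ 1 W) (hWc : HasCompactSupport W)
    (Δ : Set (EuclideanSpace ℝ (Fin d))) (hΔm : MeasurableSet Δ)
    (hΔb : Bornology.IsBounded Δ)
    (q : EuclideanSpace ℝ (Fin d) → ℝ) (hq : ContDiff ℝ 1 q) :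
    HasDerivAt (fun t : ℝ => ∫ y in (fun x => x + t • W x) '' Δ, q y)
      (∫ x in Δ, (⟪gradient q x, W x⟫ + q x * divg W x)) (0 : ℝ) := by
  classical
  have hWd : Differentiable ℝ W := hW.differentiable one_ne_zero
  have hqd : Differentiable ℝ q := hq.differentiable one_ne_zero
  obtain ⟨C₀, hC₀⟩ := (hWc.fderiv ℝ).exists_bound_of_continuous (hW.continuous_fderiv one_ne_zero)
  set K : NNReal := ⟨max C₀ 0, le_max_right _ _⟩ with hKdef
  have hAK : ∀ x, ‖fderiv ℝ W x‖ ≤ (K : ℝ) := fun x => (hC₀ x).trans (le_max_left _ _)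
  have hLip : LipschitzWith K W := by
    apply lipschitzWith_of_nnnorm_fderiv_le hWd
    intro x
    rw [← NNReal.coe_le_coe, coe_nnnorm]
    exact hAK x
  have hK0 : (0:ℝ) ≤ (K : ℝ) := K.2
  set ε : ℝ := (2 * ((K:ℝ) + 1))⁻¹ with hεdef
  have hεpos : 0 < ε := by positivity
  have hεK : ε * ((K:ℝ) + 1) = 1/2 := by
    rw [hεdef]
    field_simp
  set B : EuclideanSpace ℝ (Fin d) → Matrix (Fin d) (Fin d) ℝ := jac W with hB
  have hbridge : ∀ (t : ℝ) (x : EuclideanSpace ℝ (Fin d)),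
      ContinuousLinearMap.det (1 + t • fderiv ℝ W x) = (1 + t • B x).det :=
    fun t x => aux_det_eq (fderiv ℝ W x) t
  have hpos : ∀ t : ℝ, |t| < ε → ∀ x, 0 < (1 + t • B x).det := by
    intro t ht x
    rw [← hbridge]
    apply aux_det_pos
    calc |t| * ‖fderiv ℝ W x‖ ≤ |t| * ((K:ℝ) + 1) := by nlinarith [hAK x, abs_nonneg t]
      _ < ε * ((K:ℝ) + 1) := by nlinarith
      _ = 1/2 := hεK
      _ < 1 := by norm_num
  set μ := volume.restrict Δ with hμ
  have hKcl : IsCompact (closure Δ) := hΔb.isCompact_closure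
  haveI hμfin : IsFiniteMeasure μ := by
    constructor
    rw [hμ, Measure.restrict_apply_univ]
    exact lt_of_le_of_lt (measure_mono subset_closure) hKcl.measure_lt_top
  set F : ℝ → EuclideanSpace ℝ (Fin d) → ℝ :=
    fun t x => (1 + t • B x).det * q (x + t • W x) with hF
  set F' : ℝ → EuclideanSpace ℝ (Fin d) → ℝ := fun t x =>
    (Matrix.adjugate (1 + t • B x) * B x).trace * q (x + t • W x)
      + (1 + t • B x).det * (fderiv ℝ q (x + t • W x) (W x)) with hF'
  have hBc : Continuous B := by
    apply continuous_matrix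
    intro i j
    have h1 : Continuous fun x => fderiv ℝ W x := hW.continuous_fderiv one_ne_zero
    exact (EuclideanSpace.proj i).continuous.comp (h1.clm_apply continuous_const)
  have hFc : ∀ t : ℝ, Continuous (F t) := by
    intro t
    exact ((continuous_const.add (hBc.const_smul t)).matrix_det).mul
      (hq.continuous.comp (continuous_id.add (hW.continuous.const_smul t)))
  have hG : Continuous fun p : ℝ × EuclideanSpace ℝ (Fin d) => F' p.1 p.2 := by
    have hm : Continuous fun p : ℝ × EuclideanSpace ℝ (Fin d) => 1 + p.1 • B p.2 :=
      continuous_const.add (continuous_fst.smul (hBc.comp continuous_snd))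
    have hpath : Continuous fun p : ℝ × EuclideanSpace ℝ (Fin d) => p.2 + p.1 • W p.2 :=
      continuous_snd.add (continuous_fst.smul (hW.continuous.comp continuous_snd))
    exact ((hm.matrix_adjugate.matrix_mul (hBc.comp continuous_snd)).matrix_trace.mul
        (hq.continuous.comp hpath)).add
      (hm.matrix_det.mul
        (((hq.continuous_fderiv one_ne_zero).comp hpath).clm_apply (hW.continuous.comp continuous_snd)))
  set S : Set (ℝ × EuclideanSpace ℝ (Fin d)) := Set.Icc (-(ε/2)) (ε/2) ×ˢ closure Δ with hS
  have hScomp : IsCompact S := isCompact_Icc.prod hKcl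
  obtain ⟨Cb, hCb⟩ := hScomp.exists_bound_of_continuousOn hG.continuousOn
  have hF_meas : ∀ᶠ t in nhds (0:ℝ), AEStronglyMeasurable (F t) μ :=
    Filter.Eventually.of_forall fun t => (hFc t).aestronglyMeasurable
  have hF_int : Integrable (F 0) μ := by
    have hq_int : IntegrableOn q (closure Δ) :=
      hq.continuous.continuousOn.integrableOn_compact hKcl
    have h0 : F 0 = q := by
      funext x
      simp [hF]
    rw [h0]
    exact hq_int.mono_set subset_closure
  have hF'_meas : AEStronglyMeasurable (F' 0) μ :=
    (hG.comp (Continuous.prodMk_right (0:ℝ))).aestronglyMeasurable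
  have h_bound : ∀ᵐ a ∂μ, ∀ t ∈ Metric.ball (0:ℝ) (ε/2), ‖F' t a‖ ≤ Cb := by
    filter_upwards [ae_restrict_mem hΔm] with a ha
    intro t ht
    have htI : t ∈ Set.Icc (-(ε/2)) (ε/2) := by
      rw [Metric.mem_ball, Real.dist_eq, sub_zero] at ht
      rw [Set.mem_Icc]
      cases abs_cases t <;> constructor <;> linarith
    exact hCb (t, a) ⟨htI, subset_closure ha⟩
  have h_bound_int : Integrable (fun _ : EuclideanSpace ℝ (Fin d) => Cb) μ :=
    integrable_const Cb
  have h_diff : ∀ᵐ a ∂μ, ∀ t ∈ Metric.ball (0:ℝ) (ε/2),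
      HasDerivAt (fun s => F s a) (F' t a) t := by
    refine Filter.Eventually.of_forall fun a t ht => ?_
    have ht' : |t| < ε := by
      rw [Metric.mem_ball, Real.dist_eq, sub_zero] at ht
      linarith
    have hdet : HasDerivAt (fun s : ℝ => (1 + s • B a).det)
        ((Matrix.adjugate (1 + t • B a) * B a).trace) t :=
      aux_hasDerivAt_det_one_add_smul (B a) t (ne_of_gt (hpos t ht' a))
    have hpath : HasDerivAt (fun s : ℝ => a + s • W a) (W a) t := by
      simpa using ((hasDerivAt_id t).smul_const (W a)).const_add a
    have hqc : HasDerivAt (fun s : ℝ => q (a + s • W a))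
        (fderiv ℝ q (a + t • W a) (W a)) t :=
      (hqd (a + t • W a)).hasFDerivAt.comp_hasDerivAt t hpath
    simpa [hF, hF', Pi.mul_def] using hdet.mul hqc
  obtain ⟨-, hder⟩ := hasDerivAt_integral_of_dominated_loc_of_deriv_le (Metric.ball_mem_nhds (0:ℝ) (half_pos hεpos))
    hF_meas hF_int hF'_meas h_bound h_bound_int h_diff
  have hcov : ∀ t : ℝ, |t| < ε →
      (∫ y in (fun x => x + t • W x) '' Δ, q y) = ∫ a, F t a ∂μ := by
    intro t ht
    have hf' : ∀ x ∈ Δ, HasFDerivWithinAt (fun x => x + t • W x)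
        ((1 : _ →L[ℝ] _) + t • fderiv ℝ W x) Δ x := by
      intro x _
      have := (hasFDerivAt_id x).add ((hWd x).hasFDerivAt.const_smul t)
      rw [← ContinuousLinearMap.one_def] at this
      exact this.hasFDerivWithinAt
    have hinj : Set.InjOn (fun x => x + t • W x) Δ := by
      intro x hx y hy hxy
      simp only at hxy
      have h1 : x - y = t • W y - t • W x :=
        sub_eq_sub_iff_add_eq_add.mpr (by rw [hxy, add_comm])
      have h3 : ‖W y - W x‖ ≤ (K:ℝ) * ‖x - y‖ := by
        have h3' := hLip.dist_le_mul y x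
        rw [dist_eq_norm, dist_eq_norm] at h3'
        rwa [norm_sub_rev y x] at h3'
      have h2 : ‖x - y‖ ≤ |t| * ((K:ℝ) * ‖x - y‖) := by
        calc ‖x - y‖ = ‖t • (W y - W x)‖ := by rw [h1, smul_sub]
          _ ≤ |t| * ‖W y - W x‖ := by
              simpa [Real.norm_eq_abs] using norm_smul_le t (W y - W x)
          _ ≤ |t| * ((K:ℝ) * ‖x - y‖) := mul_le_mul_of_nonneg_left h3 (abs_nonneg t)
      have h6 : |t| * ((K:ℝ) + 1) < ε * ((K:ℝ) + 1) :=
        mul_lt_mul_of_pos_right ht (by positivity)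
      have h4 : ‖x - y‖ ≤ 0 := by
        nlinarith [norm_nonneg (x - y), abs_nonneg t, hK0, h6, hεK, h2]
      have h5 : x - y = 0 := norm_le_zero_iff.mp h4
      exact sub_eq_zero.mp h5
    rw [integral_image_eq_integral_abs_det_fderiv_smul volume hΔm hf' hinj q]
    refine integral_congr_ae (Filter.Eventually.of_forall fun x => ?_)
    have hp := hpos t ht x
    rw [hF]
    simp only
    rw [hbridge t x, abs_of_pos hp, smul_eq_mul]
  have hev : (fun t : ℝ => ∫ a, F t a ∂μ)
      =ᶠ[nhds (0:ℝ)] (fun t : ℝ => ∫ y in (fun x => x + t • W x) '' Δ, q y) := by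
    filter_upwards [Metric.ball_mem_nhds (0:ℝ) hεpos] with t ht
    rw [Metric.mem_ball, Real.dist_eq, sub_zero] at ht
    exact (hcov t ht).symm
  have hder' := hder.congr_of_eventuallyEq hev.symm
  have hval : (∫ a, F' 0 a ∂μ) = ∫ x in Δ, (⟪gradient q x, W x⟫ + q x * divg W x) := by
    refine integral_congr_ae (Filter.Eventually.of_forall fun x => ?_)
    have h1 : ⟪gradient q x, W x⟫ = fderiv ℝ q x (W x) := by
      rw [gradient]
      exact InnerProductSpace.toDual_symm_apply
    simp only [hF', zero_smul, add_zero, Matrix.adjugate_one, Matrix.det_one, one_mul]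
    rw [h1, divg, ← hB]
    ring
  rwa [hval] at hder'
end
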